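/- Let C : Ω ⇒ ℝ^n be a measurable closed-valued nonempty-valued mapping into closed linear-subspace candidates (each C(ω) is a closed set containing 0 that is closed under nonnegative scaling). Then C(ω) is a linear subspace for almost every ω if and only if the set of measurable selectors {x measurable : x(ω) ∈ C(ω) a.s.} is closed under negation (i.e., forms a linear space under pointwise operations). -/

import Mathlib

open MeasureTheory Metric Filter Topology

/-- Measurable approximate-projection selector: for a measurable, closed, nonempty,
convex-valued mapping `C` into a real Hilbert space and a point `p`, there is a measurable
selector realizing the distance from `p` to `C ω`. -/
lemma selector_aux {Ω : Type*} [MeasurableSpace Ω] {E : Type*} [NormedAddCommGroup E]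
    [InnerProductSpace ℝ E] [MeasurableSpace E] [BorelSpace E]
    [TopologicalSpace.SeparableSpace E] [CompleteSpace E]
    (C : Ω → Set E) (hclosed : ∀ ω, IsClosed (C ω)) (hne : ∀ ω, (C ω).Nonempty)
    (hconv : ∀ ω, Convex ℝ (C ω))
    (hdist : ∀ y : E, Measurable (fun ω => infDist y (C ω))) (p : E) :
    ∃ x : Ω → E, Measurable x ∧ ∀ ω, x ω ∈ C ω ∧ dist p (x ω) = infDist p (C ω) := by
  classical
  obtain ⟨e, he⟩ := TopologicalSpace.exists_dense_seq E
  set ε : ℕ → ℝ := fun k => 1 / (k + 1) with hε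
  have hεpos : ∀ k, 0 < ε k := fun k => by positivity
  have hεmono : ∀ {a b : ℕ}, a ≤ b → ε b ≤ ε a := by
    intro a b hab
    apply one_div_le_one_div_of_le (by positivity)
    exact_mod_cast Nat.succ_le_succ hab
  have hεlim : Tendsto ε atTop (𝓝 0) := tendsto_one_div_add_atTop_nhds_zero_nat
  set D : Ω → ℝ := fun ω => infDist p (C ω) with hD
  -- existence of approximate minimizers among the dense sequence
  have hP : ∀ (k : ℕ) (ω : Ω), ∃ i : ℕ,
      infDist (e i) (C ω) < ε k ∧ dist p (e i) < D ω + ε k := by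
    intro k ω
    have h2 : (0 : ℝ) < ε k / 2 := by have := hεpos k; linarith
    obtain ⟨c, hc, hc2⟩ := (infDist_lt_iff (hne ω)).1
      (show infDist p (C ω) < D ω + ε k / 2 by simp only [hD]; linarith)
    obtain ⟨i, hi⟩ := he.exists_dist_lt c h2
    refine ⟨i, ?_, ?_⟩
    · calc infDist (e i) (C ω) ≤ dist (e i) c := infDist_le_dist_of_mem hc
        _ < ε k := by rw [dist_comm]; linarith
    · calc dist p (e i) ≤ dist p c + dist c (e i) := dist_triangle _ _ _
        _ < D ω + ε k := by linarith
  set N : ℕ → Ω → ℕ := fun k ω => Nat.find (hP k ω) with hN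
  set y : ℕ → Ω → E := fun k ω => e (N k ω) with hy
  have hyC : ∀ k ω, infDist (y k ω) (C ω) < ε k := fun k ω => (Nat.find_spec (hP k ω)).1
  have hyp : ∀ k ω, dist p (y k ω) < D ω + ε k := fun k ω => (Nat.find_spec (hP k ω)).2
  -- measurability of the approximations
  have hDm : Measurable D := hdist p
  have hNm : ∀ k, Measurable (N k) := by
    intro k
    apply measurable_to_countable'
    intro i
    have : N k ⁻¹' {i} = {ω | (infDist (e i) (C ω) < ε k ∧ dist p (e i) < D ω + ε k) ∧
        ∀ j < i, ¬(infDist (e j) (C ω) < ε k ∧ dist p (e j) < D ω + ε k)} := by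
      ext ω
      simp only [Set.mem_preimage, Set.mem_singleton_iff, hN, Nat.find_eq_iff, Set.mem_setOf_eq]
    rw [this]
    have hbase : ∀ j : ℕ, MeasurableSet
        {ω | infDist (e j) (C ω) < ε k ∧ dist p (e j) < D ω + ε k} := by
      intro j
      apply MeasurableSet.inter
      · exact measurableSet_lt (hdist (e j)) measurable_const
      · exact measurableSet_lt measurable_const (hDm.add_const _)
    have : MeasurableSet ({ω | infDist (e i) (C ω) < ε k ∧ dist p (e i) < D ω + ε k} ∩
        ⋂ j ∈ Set.Iio i, {ω | infDist (e j) (C ω) < ε k ∧ dist p (e j) < D ω + ε k}ᶜ) := by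
      refine (hbase i).inter (MeasurableSet.biInter (Set.to_countable _)
        fun j _ => (hbase j).compl)
    convert this using 1
    ext ω
    simp only [Set.mem_setOf_eq, Set.mem_inter_iff, Set.mem_iInter, Set.mem_compl_iff,
      Set.mem_Iio]
  have hym : ∀ k, Measurable (y k) := fun k => measurable_from_top.comp (hNm k)
  have hD0 : ∀ ω, 0 ≤ D ω := fun ω => infDist_nonneg
  -- the key Cauchy estimate via the parallelogram law
  have key : ∀ (ω : Ω) (j k Nn : ℕ), Nn ≤ j → Nn ≤ k →
      dist (y j ω) (y k ω) ≤ 2 * ε Nn + 4 * Real.sqrt (ε Nn * (D ω + ε Nn)) := by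
    intro ω j k Nn hj hk
    obtain ⟨u, hu, huy⟩ := (infDist_lt_iff (hne ω)).1 (lt_of_lt_of_le (hyC j ω) (hεmono hj))
    obtain ⟨v, hv, hvy⟩ := (infDist_lt_iff (hne ω)).1 (lt_of_lt_of_le (hyC k ω) (hεmono hk))
    have hup : dist p u ≤ D ω + 2 * ε Nn := by
      have h1 := hyp j ω
      have h2 := hεmono hj
      calc dist p u ≤ dist p (y j ω) + dist (y j ω) u := dist_triangle _ _ _
        _ ≤ D ω + 2 * ε Nn := by linarith
    have hvp : dist p v ≤ D ω + 2 * ε Nn := by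
      have h1 := hyp k ω
      have h2 := hεmono hk
      calc dist p v ≤ dist p (y k ω) + dist (y k ω) v := dist_triangle _ _ _
        _ ≤ D ω + 2 * ε Nn := by linarith
    have hmid : (1 / 2 : ℝ) • u + (1 / 2 : ℝ) • v ∈ C ω :=
      hconv ω hu hv (by norm_num) (by norm_num) (by norm_num)
    have hdm : D ω ≤ dist p ((1 / 2 : ℝ) • u + (1 / 2 : ℝ) • v) := infDist_le_dist_of_mem hmid
    -- parallelogram law
    have par := parallelogram_law_with_norm ℝ (u - p) (v - p)
    have hsum : (u - p) + (v - p) = (2 : ℝ) • ((1 / 2 : ℝ) • u + (1 / 2 : ℝ) • v - p) := by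
      module
    have hd1 : ‖(u - p) + (v - p)‖ = 2 * ‖(1 / 2 : ℝ) • u + (1 / 2 : ℝ) • v - p‖ := by
      rw [hsum, norm_smul]
      norm_num
    have hd2 : (u - p) - (v - p) = u - v := by abel
    have hmp : ‖(1 / 2 : ℝ) • u + (1 / 2 : ℝ) • v - p‖ =
        dist p ((1 / 2 : ℝ) • u + (1 / 2 : ℝ) • v) := by
      rw [dist_comm, dist_eq_norm]
    have hun : ‖u - p‖ = dist p u := by rw [dist_comm, dist_eq_norm]
    have hvn : ‖v - p‖ = dist p v := by rw [dist_comm, dist_eq_norm]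
    rw [hd1, hd2, hmp, hun, hvn] at par
    -- par : (2 * dist p mid) * (2 * dist p mid) + ‖u - v‖ * ‖u - v‖
    --     = 2 * (dist p u * dist p u + dist p v * dist p v)
    have hsq : ‖u - v‖ * ‖u - v‖ ≤ 16 * (ε Nn * (D ω + ε Nn)) := by
      nlinarith [hεpos Nn, hD0 ω, dist_nonneg (x := p) (y := u),
        dist_nonneg (x := p) (y := v),
        dist_nonneg (x := p) (y := (1 / 2 : ℝ) • u + (1 / 2 : ℝ) • v)]
    have hnuv : ‖u - v‖ ≤ 4 * Real.sqrt (ε Nn * (D ω + ε Nn)) := by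
      have h1 : ‖u - v‖ = Real.sqrt (‖u - v‖ * ‖u - v‖) :=
        (Real.sqrt_mul_self (norm_nonneg _)).symm
      rw [h1]
      have h2 : Real.sqrt (‖u - v‖ * ‖u - v‖) ≤ Real.sqrt (16 * (ε Nn * (D ω + ε Nn))) :=
        Real.sqrt_le_sqrt hsq
      have h3 : Real.sqrt (16 * (ε Nn * (D ω + ε Nn))) =
          4 * Real.sqrt (ε Nn * (D ω + ε Nn)) := by
        rw [show (16 : ℝ) = 4 ^ 2 by norm_num, Real.sqrt_mul (by positivity),
          Real.sqrt_sq (by norm_num)]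
      rw [h3] at h2
      exact h2
    have huv : dist u v ≤ 4 * Real.sqrt (ε Nn * (D ω + ε Nn)) := by
      rw [dist_eq_norm]; exact hnuv
    calc dist (y j ω) (y k ω) ≤ dist (y j ω) u + dist u (y k ω) := dist_triangle _ _ _
      _ ≤ dist (y j ω) u + (dist u v + dist v (y k ω)) := by
          have := dist_triangle u v (y k ω); linarith
      _ ≤ 2 * ε Nn + 4 * Real.sqrt (ε Nn * (D ω + ε Nn)) := by
          have h1 : dist v (y k ω) < ε Nn := by rw [dist_comm]; exact hvy
          linarith
  -- Cauchy sequences and limits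
  have hcauchy : ∀ ω, CauchySeq (fun k => y k ω) := by
    intro ω
    apply cauchySeq_of_le_tendsto_0 (fun Nn => 2 * ε Nn + 4 * Real.sqrt (ε Nn * (D ω + ε Nn)))
      (fun j k Nn hj hk => key ω j k Nn hj hk)
    have hc : Continuous (fun t : ℝ => 2 * t + 4 * Real.sqrt (t * (D ω + t))) := by
      have h1 : Continuous fun t : ℝ => t * (D ω + t) :=
        continuous_id.mul (continuous_const.add continuous_id)
      exact (continuous_const.mul continuous_id).add
        (continuous_const.mul (Real.continuous_sqrt.comp h1))
    have := (hc.tendsto 0).comp hεlim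
    simpa [Function.comp_def] using this
  choose x hx using fun ω => cauchySeq_tendsto_of_complete (hcauchy ω)
  have hmemx : ∀ ω, x ω ∈ C ω := by
    intro ω
    have h0 : Tendsto (fun k => infDist (y k ω) (C ω)) atTop (𝓝 (infDist (x ω) (C ω))) :=
      ((continuous_infDist_pt (C ω)).tendsto _).comp (hx ω)
    have hle : infDist (x ω) (C ω) ≤ 0 :=
      le_of_tendsto_of_tendsto' h0 hεlim fun k => (hyC k ω).le
    exact ((hclosed ω).mem_iff_infDist_zero (hne ω)).2 (le_antisymm hle infDist_nonneg)
  refine ⟨x, ?_, fun ω => ⟨hmemx ω, ?_⟩⟩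
  · apply measurable_of_tendsto_metrizable hym
    rw [tendsto_pi_nhds]
    exact hx
  · have h1 : Tendsto (fun k => dist p (y k ω)) atTop (𝓝 (dist p (x ω))) :=
      tendsto_const_nhds.dist (hx ω)
    apply le_antisymm
    · have h2 : Tendsto (fun k => D ω + ε k) atTop (𝓝 (D ω)) := by
        simpa using tendsto_const_nhds.add hεlim
      exact le_of_tendsto_of_tendsto' h1 h2 fun k => (hyp k ω).le
    · exact infDist_le_dist_of_mem (hmemx ω)

/-- a measurable, closed-convex-valued mapping `C` whose values contain `0`
and are closed under nonnegative scaling is a.s. linear-subspace-valued iff its set of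
measurable selectors is a linear space (equivalently, closed under negation). -/
theorem stmt15 {Ω : Type*} [F : MeasurableSpace Ω] (μ : Measure Ω) [IsProbabilityMeasure μ]
    (n : ℕ) (C : Ω → Set (Fin n → ℝ))
    (hclosed : ∀ ω, IsClosed (C ω)) (hzero : ∀ ω, (0 : Fin n → ℝ) ∈ C ω)
    (hconv : ∀ ω, Convex ℝ (C ω))
    (hcone : ∀ ω, ∀ y ∈ C ω, ∀ l : ℝ, 0 ≤ l → l • y ∈ C ω)
    (hmeas : ∀ U : Set (Fin n → ℝ), IsOpen U → MeasurableSet {ω | (C ω ∩ U).Nonempty}) :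
    (∀ᵐ ω ∂μ, ∃ W : Submodule ℝ (Fin n → ℝ), C ω = (W : Set (Fin n → ℝ))) ↔
    (∀ x : Ω → (Fin n → ℝ), Measurable x → (∀ᵐ ω ∂μ, x ω ∈ C ω) →
      ∀ᵐ ω ∂μ, -(x ω) ∈ C ω) := by
  classical
  constructor
  · -- easy direction: subspaces are closed under negation
    intro hae x _ hxC
    filter_upwards [hae, hxC] with ω hW hx
    obtain ⟨W, hW⟩ := hW
    rw [hW] at hx ⊢
    simp only [SetLike.mem_coe] at hx ⊢
    exact W.neg_mem hx
  · intro h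
    -- move to the Euclidean (inner product) structure
    set E := EuclideanSpace ℝ (Fin n) with hE
    let Φ : E ≃L[ℝ] (Fin n → ℝ) := PiLp.continuousLinearEquiv 2 ℝ (fun _ : Fin n => ℝ)
    set C' : Ω → Set E := fun ω => ⇑Φ ⁻¹' (C ω) with hC'
    have hclosed' : ∀ ω, IsClosed (C' ω) := fun ω => (hclosed ω).preimage Φ.continuous
    have hne' : ∀ ω, (C' ω).Nonempty := fun ω =>
      ⟨0, by simp only [hC', Set.mem_preimage, map_zero]; exact hzero ω⟩
    have hconv' : ∀ ω, Convex ℝ (C' ω) := by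
      intro ω
      have := (hconv ω).linear_preimage (Φ : E →ₗ[ℝ] (Fin n → ℝ))
      simpa [hC'] using this
    have hdist' : ∀ y : E, Measurable (fun ω => infDist y (C' ω)) := by
      intro y
      apply measurable_of_Iio
      intro r
      have : (fun ω => infDist y (C' ω)) ⁻¹' Set.Iio r =
          {ω | (C ω ∩ (⇑Φ.symm ⁻¹' ball y r)).Nonempty} := by
        ext ω
        simp only [Set.mem_preimage, Set.mem_Iio, Set.mem_setOf_eq]
        rw [infDist_lt_iff (hne' ω)]
        constructor
        · rintro ⟨z, hz, hzr⟩
          refine ⟨Φ z, hz, ?_⟩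
          simp only [Set.mem_preimage, ContinuousLinearEquiv.symm_apply_apply, mem_ball,
            dist_comm]
          exact hzr
        · rintro ⟨w, hw, hwr⟩
          refine ⟨Φ.symm w, ?_, ?_⟩
          · simp only [hC', Set.mem_preimage, ContinuousLinearEquiv.apply_symm_apply]
            exact hw
          · simp only [Set.mem_preimage, mem_ball] at hwr
            rw [dist_comm]
            exact hwr
      rw [this]
      exact hmeas _ ((isOpen_ball).preimage Φ.symm.continuous)
    -- key claim: distances to C' are symmetric under negation, a.e.
    have claim : ∀ p : E, ∀ᵐ ω ∂μ, infDist (-p) (C' ω) ≤ infDist p (C' ω) := by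
      intro p
      obtain ⟨x', hx'm, hx'⟩ := selector_aux C' hclosed' hne' hconv' hdist' p
      have hxm : Measurable fun ω => Φ (x' ω) := Φ.continuous.measurable.comp hx'm
      have hxC : ∀ᵐ ω ∂μ, Φ (x' ω) ∈ C ω := Eventually.of_forall fun ω => (hx' ω).1
      filter_upwards [h _ hxm hxC] with ω hneg
      have hmem : -x' ω ∈ C' ω := by
        simp only [hC', Set.mem_preimage, map_neg]
        exact hneg
      calc infDist (-p) (C' ω) ≤ dist (-p) (-x' ω) := infDist_le_dist_of_mem hmem
        _ = dist p (x' ω) := dist_neg_neg _ _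
        _ = infDist p (C' ω) := (hx' ω).2
    obtain ⟨e, he⟩ := TopologicalSpace.exists_dense_seq E
    have haesym : ∀ᵐ ω ∂μ, ∀ i : ℕ, infDist (-(e i)) (C' ω) ≤ infDist (e i) (C' ω) :=
      ae_all_iff.2 fun i => claim (e i)
    filter_upwards [haesym] with ω hsym
    -- extend symmetry from the dense sequence to all points
    have hall : ∀ p : E, infDist (-p) (C' ω) ≤ infDist p (C' ω) := by
      have hSc : IsClosed {p : E | infDist (-p) (C' ω) ≤ infDist p (C' ω)} :=
        isClosed_le ((continuous_infDist_pt (C' ω)).comp continuous_neg)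
          (continuous_infDist_pt (C' ω))
      intro p
      have hsub : Set.range e ⊆ {p : E | infDist (-p) (C' ω) ≤ infDist p (C' ω)} := by
        rintro _ ⟨i, rfl⟩
        exact hsym i
      have : closure (Set.range e) ⊆ {p : E | infDist (-p) (C' ω) ≤ infDist p (C' ω)} :=
        closure_minimal hsub hSc
      exact this (by rw [he.closure_eq]; trivial)
    -- C' ω is symmetric
    have hCsym' : ∀ y ∈ C' ω, -y ∈ C' ω := by
      intro y hy
      have h0 : infDist (-y) (C' ω) ≤ 0 := by
        have := hall y
        rwa [infDist_zero_of_mem hy] at this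
      exact ((hclosed' ω).mem_iff_infDist_zero (hne' ω)).2
        (le_antisymm h0 infDist_nonneg)
    -- hence C ω is symmetric
    have hCsym : ∀ z ∈ C ω, -z ∈ C ω := by
      intro z hz
      have h1 : Φ.symm z ∈ C' ω := by
        simp only [hC', Set.mem_preimage, ContinuousLinearEquiv.apply_symm_apply]
        exact hz
      have h2 := hCsym' _ h1
      simp only [hC', Set.mem_preimage, map_neg, ContinuousLinearEquiv.apply_symm_apply] at h2
      exact h2
    -- build the submodule
    refine ⟨⟨⟨⟨C ω, ?_⟩, hzero ω⟩, ?_⟩, rfl⟩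
    · intro a b ha hb
      have hmid : (1 / 2 : ℝ) • a + (1 / 2 : ℝ) • b ∈ C ω :=
        hconv ω ha hb (by norm_num) (by norm_num) (by norm_num)
      have h2 := hcone ω _ hmid 2 (by norm_num)
      have : (2 : ℝ) • ((1 / 2 : ℝ) • a + (1 / 2 : ℝ) • b) = a + b := by
        rw [smul_add, smul_smul, smul_smul]
        norm_num
      rwa [this] at h2
    · intro c y hy
      rcases le_or_gt 0 c with hc | hc
      · exact hcone ω y hy c hc
      · have h1 := hcone ω (-y) (hCsym y hy) (-c) (by linarith)
        rwa [neg_smul_neg] at h1
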